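/- A complex symmetric d-tensor A = (a_{i₁⋯i_d}) of dimension n is symmetrically odeco over ℂ — i.e. there exists a complex orthogonal matrix O (OᵀO = Iₙ, O ∈ ℂ^{n×n}) such that the d-congruence AO^d is a diagonal tensor — if and only if the slice matrices A^{(i₃⋯i_d)} pairwise commute and each slice A^{(i₃⋯i_d)} is a diagonalizable matrix. -/

import Mathlib

open Matrix

namespace Stmt19Aux
open Module

variable {n : ℕ}


noncomputable def Bf (n : ℕ) : LinearMap.BilinForm ℂ (Fin n → ℂ) :=
  LinearMap.mk₂ ℂ (fun x y => ∑ i, x i * y i)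
    (fun x x' y => by simp [add_mul, Finset.sum_add_distrib])
    (fun a x y => by simp [Finset.mul_sum, mul_assoc])
    (fun x y y' => by simp [mul_add, Finset.sum_add_distrib])
    (fun a x y => by simp [Finset.mul_sum, mul_left_comm])

lemma Bf_apply (x y : Fin n → ℂ) : Bf n x y = ∑ i, x i * y i := rfl

lemma Bf_symm : (Bf n).IsSymm := ⟨fun x y => by simp [Bf_apply, mul_comm]⟩

lemma Bf_smul_left (a : ℂ) (x y : Fin n → ℂ) : Bf n (a • x) y = a * Bf n x y := by
  simp [Bf_apply, Finset.mul_sum, mul_assoc]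

lemma Bf_smul_right (a : ℂ) (x y : Fin n → ℂ) : Bf n x (a • y) = a * Bf n x y := by
  simp [Bf_apply, Finset.mul_sum, mul_left_comm]

lemma Bf_zero {x : Fin n → ℂ} (h : ∀ y, Bf n x y = 0) : x = 0 := by
  funext i
  have := h (Pi.single i 1)
  simpa [Bf_apply, Pi.single_apply, Finset.sum_ite_eq'] using this


lemma mulVecLin_as_end (N : Matrix (Fin n) (Fin n) ℂ) :
    (N.mulVecLin : Module.End ℂ (Fin n → ℂ)) = Matrix.toLinAlgEquiv' N := rfl

lemma maxGen_eq_eigen (M Q : Matrix (Fin n) (Fin n) ℂ) (hQ : IsUnit Q)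
    (hD : (Q⁻¹ * M * Q).IsDiag) (μ : ℂ) :
    Module.End.maxGenEigenspace (M.mulVecLin : Module.End ℂ (Fin n → ℂ)) μ
      = Module.End.eigenspace (M.mulVecLin : Module.End ℂ (Fin n → ℂ)) μ := by
  have hdet : IsUnit Q.det := (Matrix.isUnit_iff_isUnit_det Q).mp hQ
  have hQQ : Q * Q⁻¹ = 1 := Matrix.mul_nonsing_inv Q hdet
  have hQQ' : Q⁻¹ * Q = 1 := Matrix.nonsing_inv_mul Q hdet
  set d : Fin n → ℂ := (Q⁻¹ * M * Q).diag with hd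
  have hdd : Q⁻¹ * M * Q = Matrix.diagonal d := (Matrix.IsDiag.diagonal_diag hD).symm
  refine le_antisymm ?_ ((Module.End.genEigenspace _ μ).monotone le_top)
  intro x hx
  rw [Module.End.mem_maxGenEigenspace] at hx
  obtain ⟨k, hk⟩ := hx
  -- convert the endomorphism power condition into a matrix condition
  have hfm : (M.mulVecLin - μ • (1 : Module.End ℂ (Fin n → ℂ))) ^ k
      = ((M - μ • 1 : Matrix (Fin n) (Fin n) ℂ) ^ k).mulVecLin := by
    rw [mulVecLin_as_end, mulVecLin_as_end, map_pow]
    congr 1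
    rw [map_sub, _root_.map_smul, _root_.map_one]
  rw [hfm] at hk
  set y : Fin n → ℂ := Q⁻¹ *ᵥ x with hy
  have hxy : x = Q *ᵥ y := by
    rw [hy, Matrix.mulVec_mulVec, hQQ, Matrix.one_mulVec]
  -- (M - μ•1) = Q * diagonal (d - μ) * Q⁻¹
  have hsub : M - μ • 1 = Q * Matrix.diagonal (fun i => d i - μ) * Q⁻¹ := by
    have h7 : Q⁻¹ * (μ • 1 : Matrix (Fin n) (Fin n) ℂ) * Q = μ • 1 := by
      rw [Matrix.mul_smul, Matrix.mul_one, Matrix.smul_mul, hQQ']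
    have h2 : Matrix.diagonal (fun i => d i - μ) = Q⁻¹ * (M - μ • 1) * Q := by
      rw [Matrix.mul_sub, Matrix.sub_mul, hdd, h7, Matrix.smul_one_eq_diagonal,
        Matrix.diagonal_sub]
    rw [h2, Matrix.mul_assoc, Matrix.mul_assoc, hQQ, Matrix.mul_one, ← Matrix.mul_assoc, hQQ,
      Matrix.one_mul]
  have hpowc : (M - μ • 1 : Matrix (Fin n) (Fin n) ℂ) ^ k
      = Q * Matrix.diagonal (fun i => (d i - μ) ^ k) * Q⁻¹ := by
    rw [hsub]
    clear hk hxy hfm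
    induction k with
    | zero => simp [hQQ]
    | succ k ih =>
        rw [pow_succ, ih]
        have h8 : (fun i => (d i - μ) ^ (k+1)) = fun i => (d i - μ)^k * (d i - μ) := by
          funext i; rw [pow_succ]
        rw [h8, ← Matrix.diagonal_mul_diagonal]
        simp only [← Matrix.mul_assoc]
        rw [Matrix.mul_assoc (Q * Matrix.diagonal fun i => (d i - μ)^k) Q⁻¹ Q, hQQ',
          Matrix.mul_one]
  -- derive coordinatewise vanishing
  have hky : ∀ i, (d i - μ) ^ k * y i = 0 := by
    intro i
    have h3 : (Q * Matrix.diagonal (fun i => (d i - μ) ^ k) * Q⁻¹) *ᵥ x = 0 := by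
      rw [← hpowc]; exact hk
    have h4 : Matrix.diagonal (fun i => (d i - μ) ^ k) *ᵥ y = 0 := by
      have h5 : Q⁻¹ *ᵥ ((Q * Matrix.diagonal (fun i => (d i - μ) ^ k) * Q⁻¹) *ᵥ x) = 0 := by
        rw [h3, Matrix.mulVec_zero]
      rw [Matrix.mulVec_mulVec, ← Matrix.mul_assoc, ← Matrix.mul_assoc, hQQ',
        Matrix.one_mul, ← Matrix.mulVec_mulVec] at h5
      exact h5
    have := congrFun h4 i
    simpa [Matrix.mulVec_diagonal] using this
  have hy1 : ∀ i, (d i - μ) * y i = 0 := by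
    intro i
    by_cases hdi : d i - μ = 0
    · rw [hdi, zero_mul]
    · have : y i = 0 := by
        have := hky i
        rcases mul_eq_zero.mp this with h | h
        · exact absurd h (pow_ne_zero k hdi)
        · exact h
      rw [this, mul_zero]
  -- conclude x is an eigenvector
  rw [Module.End.mem_eigenspace_iff]
  have hMQ : M * Q = Q * Matrix.diagonal d := by
    calc M * Q = Q * (Q⁻¹ * M * Q) := by
          rw [← Matrix.mul_assoc, ← Matrix.mul_assoc, hQQ, Matrix.one_mul]
    _ = Q * Matrix.diagonal d := by rw [hdd]
  have hdy : Matrix.diagonal d *ᵥ y = μ • y := by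
    funext i
    have := hy1 i
    have h6 : d i * y i = μ * y i := by linear_combination this
    simpa [Matrix.mulVec_diagonal] using h6
  show M *ᵥ x = μ • x
  conv_lhs => rw [hxy, Matrix.mulVec_mulVec, hMQ, ← Matrix.mulVec_mulVec, hdy,
    Matrix.mulVec_smul, ← hxy]

lemma exists_orthogonal {ι : Type*} (M : ι → Matrix (Fin n) (Fin n) ℂ)
    (hsym : ∀ c, (M c)ᵀ = M c)
    (hcomm : ∀ c c', M c * M c' = M c' * M c)
    (hdiag : ∀ c, ∃ Q : Matrix (Fin n) (Fin n) ℂ, IsUnit Q ∧ (Q⁻¹ * M c * Q).IsDiag) :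
    ∃ O : Matrix (Fin n) (Fin n) ℂ, Oᵀ * O = 1 ∧ ∀ c, (Oᵀ * M c * O).IsDiag := by
  classical
  let f : ι → Module.End ℂ (Fin n → ℂ) := fun c => (M c).mulVecLin
  have key : ∀ c c', f c * f c' = ((M c) * (M c')).mulVecLin := fun c c' => by
    rw [Matrix.mulVecLin_mul]; rfl
  have hfc : ∀ c c', Commute (f c) (f c') := fun c c' => by
    show f c * f c' = f c' * f c
    rw [key, key, hcomm]
  have hmax : ∀ c μ, Module.End.maxGenEigenspace (f c) μ = Module.End.eigenspace (f c) μ := by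
    intro c μ
    obtain ⟨Q, hQ, hD⟩ := hdiag c
    exact maxGen_eq_eigen (M c) Q hQ hD μ
  set W : (ι → ℂ) → Submodule ℂ (Fin n → ℂ) :=
    fun χ => ⨅ c, Module.End.eigenspace (f c) (χ c) with hW
  have hsup : ⨆ χ, W χ = ⊤ := by
    have h0 := Module.End.iSup_iInf_maxGenEigenspace_eq_top_of_iSup_maxGenEigenspace_eq_top_of_commute f
      (fun c c' _ => hfc c c') (fun c => Module.End.iSup_maxGenEigenspace_eq_top _)
    simpa only [hmax] using h0
  have hind : iSupIndep W := by
    have h1 := Module.End.independent_iInf_maxGenEigenspace_of_forall_mapsTo f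
      (fun i j φ => Module.End.mapsTo_maxGenEigenspace_of_comm (hfc j i) φ)
    simpa only [hmax] using h1
  have hint : DirectSum.IsInternal W :=
    DirectSum.isInternal_submodule_of_iSupIndep_of_iSup_eq_top hind hsup
  have heig : ∀ χ c (x : Fin n → ℂ), x ∈ W χ → (M c) *ᵥ x = χ c • x := by
    intro χ c x hx
    rw [hW] at hx
    have := (Submodule.mem_iInf _).mp hx c
    exact Module.End.mem_eigenspace_iff.mp this
  have hsymB : ∀ c (x y : Fin n → ℂ), Bf n ((M c) *ᵥ x) y = Bf n x ((M c) *ᵥ y) := by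
    intro c x y
    have hM : ∀ a b, M c b a = M c a b := fun a b => congrFun (congrFun (hsym c) a) b
    simp only [Bf_apply, Matrix.mulVec, dotProduct]
    calc (∑ i, (∑ j, M c i j * x j) * y i) = ∑ i, ∑ j, M c i j * x j * y i := by
          refine Finset.sum_congr rfl fun i _ => ?_; rw [Finset.sum_mul]
      _ = ∑ a, ∑ b, M c b a * x a * y b := Finset.sum_comm
      _ = ∑ a, x a * ∑ b, M c a b * y b := by
          refine Finset.sum_congr rfl fun a _ => ?_
          rw [Finset.mul_sum]
          refine Finset.sum_congr rfl fun b _ => ?_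
          rw [hM a b]; ring
  have horth : ∀ χ χ', χ ≠ χ' → ∀ x ∈ W χ, ∀ y ∈ W χ', Bf n x y = 0 := by
    intro χ χ' hne x hx y hy
    obtain ⟨c, hc⟩ := Function.ne_iff.mp hne
    have h1 := hsymB c x y
    rw [heig χ c x hx, heig χ' c y hy, Bf_smul_left, Bf_smul_right] at h1
    by_contra h2
    exact hc (mul_right_cancel₀ h2 h1)
  have hnd : ∀ χ, ((Bf n).restrict (W χ)).Nondegenerate := by
    intro χ
    show LinearMap.Nondegenerate _
    rw [LinearMap.IsRefl.nondegenerate_iff_separatingLeft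
      (LinearMap.BilinForm.isSymm_iff.mp (Bf_symm.restrict (W χ))).isRefl]
    intro x hx
    have hx0 : ∀ y : Fin n → ℂ, Bf n (x : Fin n → ℂ) y = 0 := by
      intro y
      have hy : y ∈ (⊤ : Submodule ℂ (Fin n → ℂ)) := Submodule.mem_top
      rw [← hsup] at hy
      induction hy using Submodule.iSup_induction' with
      | mem χ' z hz =>
          by_cases hχ : χ = χ'
          · subst hχ
            exact hx ⟨z, hz⟩
          · exact horth χ χ' hχ x x.2 z hz
      | zero => simp
      | add y₁ y₂ _ _ ih₁ ih₂ => rw [map_add, ih₁, ih₂, add_zero]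
    have : (x : Fin n → ℂ) = 0 := Bf_zero hx0
    exact Subtype.ext this
  have hrsymm : ∀ χ, ((Bf n).restrict (W χ)).IsSymm := fun χ => Bf_symm.restrict _
  have hv : ∀ χ, ∃ v : Basis (Fin (finrank ℂ (W χ))) ℂ (W χ),
      ((Bf n).restrict (W χ)).IsOrthoᵢ v :=
    fun χ => LinearMap.BilinForm.exists_orthogonal_basis (LinearMap.BilinForm.isSymm_iff.mp (hrsymm χ))
  choose v hvo using hv
  have hvd : ∀ χ i, Bf n (v χ i : Fin n → ℂ) (v χ i : Fin n → ℂ) ≠ 0 := by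
    intro χ i
    have := LinearMap.BilinForm.iIsOrtho.not_isOrtho_basis_self_of_nondegenerate (hvo χ) (hnd χ) i
    simpa [LinearMap.BilinForm.IsOrtho, LinearMap.BilinForm.restrict_apply] using this
  have hsex : ∀ χ i, ∃ z : ℂ, z ^ 2 = Bf n (v χ i : Fin n → ℂ) (v χ i : Fin n → ℂ) :=
    fun χ i => IsAlgClosed.exists_pow_nat_eq _ (by norm_num : (0:ℕ) < 2)
  choose s hs using hsex
  have hs0 : ∀ χ i, s χ i ≠ 0 := by
    intro χ i h0
    apply hvd χ i
    rw [← hs χ i, h0]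
    ring
  let u : ∀ χ, Basis (Fin (finrank ℂ (W χ))) ℂ (W χ) :=
    fun χ => (v χ).unitsSMul (fun i => Units.mk0 (s χ i)⁻¹ (inv_ne_zero (hs0 χ i)))
  have hucoe : ∀ χ i, (u χ i : Fin n → ℂ) = (s χ i)⁻¹ • (v χ i : Fin n → ℂ) := by
    intro χ i
    rw [Basis.unitsSMul_apply]
    rfl
  have hBu : ∀ χ i j, Bf n (u χ i : Fin n → ℂ) (u χ j : Fin n → ℂ)
      = if i = j then 1 else 0 := by
    intro χ i j
    rw [hucoe, hucoe, Bf_smul_left, Bf_smul_right]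
    by_cases hij : i = j
    · subst hij
      rw [if_pos rfl, ← hs χ i]
      field_simp [hs0 χ i]
    · have h0 : Bf n (v χ i : Fin n → ℂ) (v χ j : Fin n → ℂ) = 0 := hvo χ hij
      rw [h0, if_neg hij]
      ring
  let b := hint.collectedBasis u
  have hb : ∀ a, b a = (u a.1 a.2 : Fin n → ℂ) := by
    intro a
    rw [hint.collectedBasis_coe u]
  have hbmem : ∀ a, b a ∈ W a.1 := fun a => hint.collectedBasis_mem u a
  have hon : ∀ a a', Bf n (b a) (b a') = if a = a' then 1 else 0 := by
    rintro ⟨χ, i⟩ ⟨χ', j⟩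
    by_cases hχ : χ = χ'
    · subst hχ
      rw [hb, hb, hBu]
      simp [Sigma.mk.inj_iff]
    · rw [horth χ χ' hχ _ (hbmem ⟨χ, i⟩) _ (hbmem ⟨χ', j⟩), if_neg]
      simp [Sigma.mk.inj_iff, hχ]
  let κ := b.indexEquiv (Pi.basisFun ℂ (Fin n))
  let b2 := b.reindex κ
  have hb2 : ∀ k, b2 k = b (κ.symm k) := fun k => b.reindex_apply κ k
  have hb2mem : ∀ k, b2 k ∈ W ((κ.symm k).1) := by
    intro k; rw [hb2]; exact hbmem _
  have hon2 : ∀ k l, Bf n (b2 k) (b2 l) = if k = l then 1 else 0 := by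
    intro k l
    rw [hb2, hb2, hon]
    simp [κ.symm.injective.eq_iff]
  refine ⟨Matrix.of fun i k => b2 k i, ?_, ?_⟩
  · ext k l
    have : (∑ i, b2 k i * b2 l i) = if k = l then 1 else 0 := by
      rw [← Bf_apply, hon2]
    simp only [Matrix.mul_apply, Matrix.transpose_apply, Matrix.of_apply, Matrix.one_apply]
    exact this
  · intro c k l hkl
    have hMb : (M c) *ᵥ (b2 l : Fin n → ℂ) = (κ.symm l).1 c • (b2 l : Fin n → ℂ) :=
      heig _ c _ (hb2mem l)
    show ((Matrix.of fun i k => b2 k i)ᵀ * M c * (Matrix.of fun i k => b2 k i)) k l = 0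
    rw [Matrix.mul_assoc, Matrix.mul_apply]
    have hcol : ∀ i, (M c * (Matrix.of fun i k => b2 k i)) i l = ((M c) *ᵥ (b2 l)) i := by
      intro i
      rw [Matrix.mul_apply]
      rfl
    calc ∑ i, (Matrix.of fun i k => b2 k i)ᵀ k i * (M c * Matrix.of fun i k => b2 k i) i l
        = ∑ i, b2 k i * ((κ.symm l).1 c * b2 l i) := by
          refine Finset.sum_congr rfl fun i _ => ?_
          rw [hcol i, hMb]
          rfl
      _ = (κ.symm l).1 c * ∑ i, b2 k i * b2 l i := by
          rw [Finset.mul_sum]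
          exact Finset.sum_congr rfl fun i _ => by ring
      _ = 0 := by rw [← Bf_apply, hon2, if_neg hkl, mul_zero]


lemma conj_entry {n : ℕ} (P O : Matrix (Fin n) (Fin n) ℂ) (a b : Fin n) :
    (Oᵀ * P * O) a b = ∑ i, ∑ j, O i a * (P i j * O j b) := by
  rw [Matrix.mul_assoc, Matrix.mul_apply]
  refine Finset.sum_congr rfl fun i _ => ?_
  rw [Matrix.mul_apply, Matrix.transpose_apply, Finset.mul_sum]

lemma S_perm {n e : ℕ} (A : (Fin (e + 2) → Fin n) → ℂ)
    (hA : ∀ (σ : Equiv.Perm (Fin (e + 2))) (idx : Fin (e + 2) → Fin n), A (idx ∘ σ) = A idx)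
    (O : Matrix (Fin n) (Fin n) ℂ)
    (σ : Equiv.Perm (Fin (e + 2))) (jdx : Fin (e + 2) → Fin n) :
    ∑ idx : Fin (e + 2) → Fin n, A idx * ∏ t, O (idx t) (jdx (σ t))
      = ∑ idx : Fin (e + 2) → Fin n, A idx * ∏ t, O (idx t) (jdx t) := by
  have step1 : ∀ x : Fin (e + 2) → Fin n,
      A x * ∏ t, O (x t) (jdx (σ t)) = A (x ∘ ⇑σ⁻¹) * ∏ t, O ((x ∘ ⇑σ⁻¹) t) (jdx t) := by
    intro x
    rw [hA σ⁻¹ x]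
    congr 1
    rw [← Equiv.prod_comp σ (fun t => O ((x ∘ ⇑σ⁻¹) t) (jdx t))]
    refine Finset.prod_congr rfl fun t _ => ?_
    simp
  calc ∑ x : Fin (e + 2) → Fin n, A x * ∏ t, O (x t) (jdx (σ t))
      = ∑ x : Fin (e + 2) → Fin n, A (x ∘ ⇑σ⁻¹) * ∏ t, O ((x ∘ ⇑σ⁻¹) t) (jdx t) :=
        Finset.sum_congr rfl fun x _ => step1 x
    _ = ∑ x : Fin (e + 2) → Fin n, A x * ∏ t, O (x t) (jdx t) := by
        refine Fintype.sum_bijective (fun x : Fin (e + 2) → Fin n => x ∘ ⇑σ⁻¹)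
          ?_ _ _ (fun x => rfl)
        exact (Equiv.piCongrLeft' (fun _ => Fin n) σ).bijective

lemma S_slice {n e : ℕ} (A : (Fin (e + 2) → Fin n) → ℂ) (O : Matrix (Fin n) (Fin n) ℂ)
    (jdx : Fin (e + 2) → Fin n) :
    ∑ idx : Fin (e + 2) → Fin n, A idx * ∏ t, O (idx t) (jdx t)
      = ∑ c : Fin e → Fin n,
          (Oᵀ * Matrix.of (fun i j => A (Fin.cons i (Fin.cons j c))) * O) (jdx 0) (jdx 1)
            * ∏ t : Fin e, O (c t) (jdx t.succ.succ) := by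
  set F : (Fin (e + 2) → Fin n) → ℂ := fun idx => A idx * ∏ t, O (idx t) (jdx t) with hF
  have h1 : ∑ idx : Fin (e + 2) → Fin n, F idx
      = ∑ p : Fin n × (Fin (e + 1) → Fin n), F (Fin.cons p.1 p.2) :=
    (Fintype.sum_equiv (Fin.consEquiv (fun _ : Fin (e + 2) => Fin n))
      (fun p : Fin n × (Fin (e + 1) → Fin n) => F (Fin.cons p.1 p.2)) F (fun p => rfl)).symm
  have h2 : ∀ i : Fin n, ∑ q : Fin (e + 1) → Fin n, F (Fin.cons i q)
      = ∑ q : Fin n × (Fin e → Fin n), F (Fin.cons i (Fin.cons q.1 q.2)) :=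
    fun i => (Fintype.sum_equiv (Fin.consEquiv (fun _ : Fin (e + 1) => Fin n))
      (fun q : Fin n × (Fin e → Fin n) => F (Fin.cons i (Fin.cons q.1 q.2)))
      (fun q => F (Fin.cons i q)) (fun q => rfl)).symm
  have hFval : ∀ (i j : Fin n) (c : Fin e → Fin n),
      F (Fin.cons i (Fin.cons j c))
        = A (Fin.cons i (Fin.cons j c)) * (O i (jdx 0) * (O j (jdx 1)
            * ∏ t : Fin e, O (c t) (jdx t.succ.succ))) := by
    intro i j c
    simp only [hF]
    congr 1
    rw [Fin.prod_univ_succ]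
    simp only [Fin.cons_zero, Fin.cons_succ]
    congr 1
    rw [Fin.prod_univ_succ]
    simp only [Fin.cons_zero, Fin.cons_succ, Fin.succ_zero_eq_one]
  calc ∑ idx : Fin (e + 2) → Fin n, F idx
      = ∑ p : Fin n × (Fin (e + 1) → Fin n), F (Fin.cons p.1 p.2) := h1
    _ = ∑ i : Fin n, ∑ q : Fin (e + 1) → Fin n, F (Fin.cons i q) := Fintype.sum_prod_type _
    _ = ∑ i : Fin n, ∑ q : Fin n × (Fin e → Fin n), F (Fin.cons i (Fin.cons q.1 q.2)) :=
        Finset.sum_congr rfl fun i _ => h2 i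
    _ = ∑ i : Fin n, ∑ j : Fin n, ∑ c : Fin e → Fin n, F (Fin.cons i (Fin.cons j c)) :=
        Finset.sum_congr rfl fun i _ => Fintype.sum_prod_type _
    _ = ∑ i : Fin n, ∑ c : Fin e → Fin n, ∑ j : Fin n, F (Fin.cons i (Fin.cons j c)) :=
        Finset.sum_congr rfl fun i _ => Finset.sum_comm
    _ = ∑ c : Fin e → Fin n, ∑ i : Fin n, ∑ j : Fin n, F (Fin.cons i (Fin.cons j c)) :=
        Finset.sum_comm
    _ = ∑ c : Fin e → Fin n,
          (Oᵀ * Matrix.of (fun i j => A (Fin.cons i (Fin.cons j c))) * O) (jdx 0) (jdx 1)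
            * ∏ t : Fin e, O (c t) (jdx t.succ.succ) := by
        refine Finset.sum_congr rfl fun c _ => ?_
        rw [conj_entry, Finset.sum_mul]
        refine Finset.sum_congr rfl fun i _ => ?_
        rw [Finset.sum_mul]
        refine Finset.sum_congr rfl fun j _ => ?_
        rw [hFval]
        simp only [Matrix.of_apply]
        ring

lemma rep {n e : ℕ} (A : (Fin (e + 2) → Fin n) → ℂ) (O : Matrix (Fin n) (Fin n) ℂ)
    (hO : Oᵀ * O = 1)
    (hdg : ∀ jdx : Fin (e + 2) → Fin n, (¬ ∀ s s' : Fin (e + 2), jdx s = jdx s') →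
      (∑ idx : Fin (e + 2) → Fin n, A idx * ∏ t, O (idx t) (jdx t)) = 0)
    (idx : Fin (e + 2) → Fin n) :
    A idx = ∑ j, (∑ kdx : Fin (e + 2) → Fin n, A kdx * ∏ t, O (kdx t) j)
      * ∏ t, O (idx t) j := by
  classical
  have hOO : O * Oᵀ = 1 := mul_eq_one_comm.mp hO
  have stepA : A idx = ∑ jdx : Fin (e + 2) → Fin n,
      (∑ kdx : Fin (e + 2) → Fin n, A kdx * ∏ t, O (kdx t) (jdx t))
        * ∏ t, O (idx t) (jdx t) := by
    symm
    calc ∑ jdx : Fin (e + 2) → Fin n,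
          (∑ kdx : Fin (e + 2) → Fin n, A kdx * ∏ t, O (kdx t) (jdx t))
            * ∏ t, O (idx t) (jdx t)
        = ∑ jdx : Fin (e + 2) → Fin n, ∑ kdx : Fin (e + 2) → Fin n,
            A kdx * ∏ t, (O (kdx t) (jdx t) * O (idx t) (jdx t)) := by
          refine Finset.sum_congr rfl fun jdx _ => ?_
          rw [Finset.sum_mul]
          refine Finset.sum_congr rfl fun kdx _ => ?_
          rw [mul_assoc, ← Finset.prod_mul_distrib]
      _ = ∑ kdx : Fin (e + 2) → Fin n, ∑ jdx : Fin (e + 2) → Fin n,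
            A kdx * ∏ t, (O (kdx t) (jdx t) * O (idx t) (jdx t)) := Finset.sum_comm
      _ = ∑ kdx : Fin (e + 2) → Fin n, A kdx
            * ∏ t, (∑ j, O (kdx t) j * O (idx t) j) := by
          refine Finset.sum_congr rfl fun kdx _ => ?_
          rw [← Finset.mul_sum, Fintype.prod_sum (fun t j => O (kdx t) j * O (idx t) j)]
      _ = ∑ kdx : Fin (e + 2) → Fin n, A kdx
            * ∏ t, (1 : Matrix (Fin n) (Fin n) ℂ) (kdx t) (idx t) := by
          refine Finset.sum_congr rfl fun kdx _ => ?_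
          congr 1
          refine Finset.prod_congr rfl fun t _ => ?_
          rw [← hOO, Matrix.mul_apply]
          refine Finset.sum_congr rfl fun j _ => ?_
          rw [Matrix.transpose_apply]
      _ = A idx := by
          have hprod : ∀ kdx : Fin (e + 2) → Fin n,
              (∏ t, (1 : Matrix (Fin n) (Fin n) ℂ) (kdx t) (idx t))
                = if kdx = idx then 1 else 0 := by
            intro kdx
            simp only [Matrix.one_apply]
            rw [Finset.prod_boole]
            congr 1
            simp [funext_iff]
          rw [Finset.sum_congr rfl (fun kdx _ => by rw [hprod kdx])]
          simp
  rw [stepA]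
  -- restrict the sum to constant index functions
  have himg : ∀ jdx : Fin (e + 2) → Fin n,
      jdx ∉ Finset.univ.image (fun j : Fin n => (fun _ => j : Fin (e + 2) → Fin n)) →
      (∑ kdx : Fin (e + 2) → Fin n, A kdx * ∏ t, O (kdx t) (jdx t))
        * ∏ t, O (idx t) (jdx t) = 0 := by
    intro jdx hjdx
    have hnc : ¬ ∀ s s' : Fin (e + 2), jdx s = jdx s' := by
      intro hcon
      apply hjdx
      refine Finset.mem_image.mpr ⟨jdx 0, Finset.mem_univ _, ?_⟩
      funext s
      exact hcon 0 s
    rw [hdg jdx hnc, zero_mul]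
  rw [← Finset.sum_subset (Finset.subset_univ _) (fun x _ hx => himg x hx)]
  rw [Finset.sum_image (fun j _ j' _ h => congrFun h 0)]

lemma slice_decomp {n e : ℕ} (A : (Fin (e + 2) → Fin n) → ℂ) (O : Matrix (Fin n) (Fin n) ℂ)
    (hO : Oᵀ * O = 1)
    (hdg : ∀ jdx : Fin (e + 2) → Fin n, (¬ ∀ s s' : Fin (e + 2), jdx s = jdx s') →
      (∑ idx : Fin (e + 2) → Fin n, A idx * ∏ t, O (idx t) (jdx t)) = 0)
    (c : Fin e → Fin n) :
    Matrix.of (fun i j => A (Fin.cons i (Fin.cons j c)))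
      = O * Matrix.diagonal (fun j =>
          (∑ kdx : Fin (e + 2) → Fin n, A kdx * ∏ t, O (kdx t) j)
            * ∏ t : Fin e, O (c t) j) * Oᵀ := by
  ext i i'
  rw [Matrix.of_apply, rep A O hO hdg (Fin.cons i (Fin.cons i' c))]
  rw [Matrix.mul_apply]
  refine Finset.sum_congr rfl fun j _ => ?_
  rw [Matrix.mul_diagonal, Matrix.transpose_apply]
  have hp : (∏ t, O ((Fin.cons i (Fin.cons i' c) : Fin (e + 2) → Fin n) t) j)
      = O i j * (O i' j * ∏ t : Fin e, O (c t) j) := by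
    rw [Fin.prod_univ_succ]
    simp only [Fin.cons_zero, Fin.cons_succ]
    congr 1
    rw [Fin.prod_univ_succ]
    simp only [Fin.cons_zero, Fin.cons_succ]
  rw [hp]
  ring

end Stmt19Aux

open Stmt19Aux in
/-- A complex symmetric `d`-tensor `A` (here `d = e + 2 ≥ 3`) of dimension
`n` is symmetrically odeco over `ℂ` — there is a complex orthogonal matrix `O` (`OᵀO = Iₙ`)
such that the `d`-congruence `AO^d` is a diagonal tensor — iff the slice matrices
`A^{(i₃⋯i_d)}` pairwise commute and each slice is a diagonalizable matrix. -/
theorem stmt_19 {n e : ℕ} (he : 1 ≤ e)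
    (A : (Fin (e + 2) → Fin n) → ℂ)
    (hA : ∀ (σ : Equiv.Perm (Fin (e + 2))) (idx : Fin (e + 2) → Fin n), A (idx ∘ σ) = A idx) :
    (∃ O : Matrix (Fin n) (Fin n) ℂ, Oᵀ * O = 1 ∧
        ∀ jdx : Fin (e + 2) → Fin n, (¬ ∀ s s' : Fin (e + 2), jdx s = jdx s') →
          (∑ idx : Fin (e + 2) → Fin n, A idx * ∏ t, O (idx t) (jdx t)) = 0)
      ↔ ((∀ c c' : Fin e → Fin n,
            Matrix.of (fun i j => A (Fin.cons i (Fin.cons j c)))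
                * Matrix.of (fun i j => A (Fin.cons i (Fin.cons j c')))
              = Matrix.of (fun i j => A (Fin.cons i (Fin.cons j c')))
                * Matrix.of (fun i j => A (Fin.cons i (Fin.cons j c)))) ∧
          (∀ c : Fin e → Fin n, ∃ Q : Matrix (Fin n) (Fin n) ℂ, IsUnit Q ∧
            (Q⁻¹ * Matrix.of (fun i j => A (Fin.cons i (Fin.cons j c))) * Q).IsDiag)) := by
  classical
  have h01 : (0 : Fin (e + 2)) ≠ 1 := by
    intro h
    have := congrArg Fin.val h
    simp [Fin.val_one] at this
  have hswap : ∀ (i j : Fin n) (c : Fin e → Fin n),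
      A (Fin.cons i (Fin.cons j c)) = A (Fin.cons j (Fin.cons i c)) := by
    intro i j c
    have h := hA (Equiv.swap 0 1) (Fin.cons i (Fin.cons j c))
    rw [← h]
    congr 1
    funext t
    show (Fin.cons i (Fin.cons j c) : Fin (e + 2) → Fin n) (Equiv.swap 0 1 t)
      = (Fin.cons j (Fin.cons i c) : Fin (e + 2) → Fin n) t
    refine Fin.cases ?_ (fun t' => ?_) t
    · rw [Equiv.swap_apply_left, ← Fin.succ_zero_eq_one, Fin.cons_succ, Fin.cons_zero,
        Fin.cons_zero]
    · refine Fin.cases ?_ (fun t'' => ?_) t'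
      · rw [Fin.succ_zero_eq_one, Equiv.swap_apply_right, Fin.cons_zero,
          ← Fin.succ_zero_eq_one, Fin.cons_succ, Fin.cons_zero]
      · have hne0 : (t''.succ.succ : Fin (e + 2)) ≠ 0 := Fin.succ_ne_zero _
        have hne1 : (t''.succ.succ : Fin (e + 2)) ≠ 1 := by
          rw [← Fin.succ_zero_eq_one]
          intro h
          exact Fin.succ_ne_zero t'' (Fin.succ_injective _ h)
        rw [Equiv.swap_apply_of_ne_of_ne hne0 hne1, Fin.cons_succ, Fin.cons_succ,
          Fin.cons_succ, Fin.cons_succ]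
  have hMsym : ∀ c : Fin e → Fin n,
      (Matrix.of (fun i j => A (Fin.cons i (Fin.cons j c))))ᵀ
        = Matrix.of (fun i j => A (Fin.cons i (Fin.cons j c))) := by
    intro c
    ext i j
    rw [Matrix.transpose_apply, Matrix.of_apply, Matrix.of_apply]
    exact hswap j i c
  constructor
  · rintro ⟨O, hO, hdg⟩
    have hOO : O * Oᵀ = 1 := mul_eq_one_comm.mp hO
    have hOinv : O⁻¹ = Oᵀ := Matrix.inv_eq_left_inv hO
    have hUnit : IsUnit O := ⟨⟨O, Oᵀ, hOO, hO⟩, rfl⟩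
    have hkey : ∀ D D' : Matrix (Fin n) (Fin n) ℂ,
        (O * D * Oᵀ) * (O * D' * Oᵀ) = O * (D * D') * Oᵀ := by
      intro D D'
      calc (O * D * Oᵀ) * (O * D' * Oᵀ) = O * D * (Oᵀ * O) * D' * Oᵀ := by
            simp only [Matrix.mul_assoc]
        _ = O * (D * D') * Oᵀ := by rw [hO, Matrix.mul_one]; simp only [Matrix.mul_assoc]
    have hsl := slice_decomp A O hO hdg
    constructor
    · intro c c'
      have hdcomm : ∀ (d d' : Fin n → ℂ),
          (Matrix.diagonal d) * (Matrix.diagonal d') = Matrix.diagonal d' * Matrix.diagonal d := by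
        intro d d'
        rw [Matrix.diagonal_mul_diagonal, Matrix.diagonal_mul_diagonal]
        exact congrArg Matrix.diagonal (funext fun i => mul_comm (d i) (d' i))
      rw [hsl c, hsl c', hkey, hkey, hdcomm]
    · intro c
      refine ⟨O, hUnit, ?_⟩
      rw [hOinv, hsl c]
      set Dm := Matrix.diagonal (fun j =>
          (∑ kdx : Fin (e + 2) → Fin n, A kdx * ∏ t, O (kdx t) j)
            * ∏ t : Fin e, O (c t) j) with hDm
      have hthis : Oᵀ * (O * Dm * Oᵀ) * O = Dm := by
        calc Oᵀ * (O * Dm * Oᵀ) * O = Oᵀ * O * Dm * (Oᵀ * O) := by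
              simp only [Matrix.mul_assoc]
          _ = Dm := by rw [hO, Matrix.one_mul, Matrix.mul_one]
      rw [hthis, hDm]
      exact Matrix.isDiag_diagonal _
  · rintro ⟨h1, h2⟩
    obtain ⟨O, hO, hD⟩ := exists_orthogonal
      (fun c : Fin e → Fin n => Matrix.of (fun i j => A (Fin.cons i (Fin.cons j c))))
      hMsym h1 h2
    refine ⟨O, hO, ?_⟩
    intro jdx hjdx
    push_neg at hjdx
    obtain ⟨s, s', hss⟩ := hjdx
    have hsne : s ≠ s' := fun h => hss (by rw [h])
    set τ := Equiv.swap (0 : Fin (e + 2)) s with hτ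
    set u := τ.symm s' with hu
    have hu0 : u ≠ 0 := by
      intro h
      have h2' : τ u = s' := Equiv.apply_symm_apply τ s'
      rw [h, hτ, Equiv.swap_apply_left] at h2'
      exact hsne h2'
    set ρ := Equiv.swap (1 : Fin (e + 2)) u with hρ
    set σ := ρ.trans τ with hσ
    have hσ0 : σ 0 = s := by
      rw [hσ, Equiv.trans_apply, hρ, Equiv.swap_apply_of_ne_of_ne h01 (Ne.symm hu0), hτ,
        Equiv.swap_apply_left]
    have hσ1 : σ 1 = s' := by
      rw [hσ, Equiv.trans_apply, hρ, Equiv.swap_apply_left, hu, Equiv.apply_symm_apply]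
    have key2 := S_perm A hA O σ jdx
    rw [← key2]
    have key : (∑ idx : Fin (e + 2) → Fin n, A idx * ∏ t, O (idx t) (jdx (σ t)))
        = ∑ c : Fin e → Fin n,
            (Oᵀ * Matrix.of (fun i j => A (Fin.cons i (Fin.cons j c))) * O)
              (jdx (σ 0)) (jdx (σ 1))
              * ∏ t : Fin e, O (c t) (jdx (σ t.succ.succ)) :=
      S_slice A O (fun t => jdx (σ t))
    rw [key]
    refine Finset.sum_eq_zero fun c _ => ?_
    rw [hσ0, hσ1, hD c hss, zero_mul]
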